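/- arXiv:1707.07644 — 3 statements merged into one kernel-verified Lean document; each statement's English description precedes it below -/
import Mathlib

section
/- Let I : [0, T) → ℝ be twice differentiable with I(t) > 0, and suppose there is α > 0 with I''(t)I(t) − (1+α)(I'(t))² > 0 for all t, and I'(0) > 0. Then with ã := I'(0)/I(0)^{α+1}, one has I(t)^α > I(0)^α / (1 − I(0)^α α ã t) for all t in the domain, and hence I(t) → ∞ as t → (1/(I(0)^α α ã))⁻; in particular T ≤ 1/(I(0)^α α ã). -/
open Set

/-- Levine-type concavity blow-up lemma: if `I > 0` is `C²` on `[0,T)`,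
`I''I − (1+α)(I')² > 0` there, and `I'(0) > 0`, then with
`ã = I'(0)/I(0)^{α+1}` one has `I(t)^α > I(0)^α/(1 − I(0)^α α ã t)` on `(0,T)`,
and `T ≤ 1/(I(0)^α α ã)`. -/
theorem concavity_blowup (T α : ℝ) (hT : 0 < T) (hα : 0 < α) (I : ℝ → ℝ)
    (hd1 : ∀ t ∈ Ico 0 T, DifferentiableAt ℝ I t)
    (hd2 : ∀ t ∈ Ico 0 T, DifferentiableAt ℝ (deriv I) t)
    (hpos : ∀ t ∈ Ico 0 T, 0 < I t)
    (hconc : ∀ t ∈ Ico 0 T, 0 < deriv (deriv I) t * I t - (1 + α) * (deriv I t) ^ 2)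
    (hI'0 : 0 < deriv I 0) :
    (∀ t ∈ Ioo 0 T,
      I 0 ^ α / (1 - I 0 ^ α * α * (deriv I 0 / I 0 ^ (α + 1)) * t) < I t ^ α) ∧
    T ≤ 1 / (I 0 ^ α * α * (deriv I 0 / I 0 ^ (α + 1))) := by
  have h0T : (0:ℝ) ∈ Ico 0 T := ⟨le_refl 0, hT⟩
  have hI0 : 0 < I 0 := hpos 0 h0T
  set f : ℝ → ℝ := fun t => deriv I t / I t ^ (α + 1) with hfdef
  set a : ℝ := deriv I 0 / I 0 ^ (α + 1) with hadef
  have ha0 : 0 < a := div_pos hI'0 (Real.rpow_pos_of_pos hI0 _)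
  -- derivative of f
  have hfd : ∀ t ∈ Ico 0 T, HasDerivAt f
      ((deriv (deriv I) t * I t ^ (α+1) -
        deriv I t * (deriv I t * (α+1) * I t ^ (α+1-1))) / (I t ^ (α+1))^2) t := by
    intro t ht
    exact ((hd2 t ht).hasDerivAt).div
      (((hd1 t ht).hasDerivAt).rpow_const (Or.inl (hpos t ht).ne'))
      (Real.rpow_pos_of_pos (hpos t ht) _).ne'
  have hfd_pos : ∀ t ∈ Ico 0 T,
      0 < (deriv (deriv I) t * I t ^ (α+1) -
        deriv I t * (deriv I t * (α+1) * I t ^ (α+1-1))) / (I t ^ (α+1))^2 := by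
    intro t ht
    apply div_pos _ (pow_pos (Real.rpow_pos_of_pos (hpos t ht) _) 2)
    have h1 : I t ^ (α+1) = I t ^ α * I t := by
      rw [Real.rpow_add_one (hpos t ht).ne']
    have h2 : I t ^ (α+1-1) = I t ^ α := by norm_num
    rw [h1, h2]
    have h3 := hconc t ht
    have h4 : (0:ℝ) < I t ^ α := Real.rpow_pos_of_pos (hpos t ht) _
    nlinarith [mul_pos h4 h3]
  -- f strictly increasing from 0
  have hfmono : ∀ t ∈ Ioo 0 T, f 0 < f t := by
    intro t ht
    have hsub : Icc (0:ℝ) t ⊆ Ico 0 T := fun x hx => ⟨hx.1, lt_of_le_of_lt hx.2 ht.2⟩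
    have hmono : StrictMonoOn f (Icc 0 t) := by
      apply strictMonoOn_of_deriv_pos (convex_Icc 0 t)
      · intro x hx
        exact ((hfd x (hsub hx)).differentiableAt.continuousAt).continuousWithinAt
      · intro x hx
        rw [interior_Icc] at hx
        have hx' := hsub (Ioo_subset_Icc_self hx)
        rw [(hfd x hx').deriv]
        exact hfd_pos x hx'
    exact hmono ⟨le_refl 0, ht.1.le⟩ ⟨ht.1.le, le_refl t⟩ ht.1
  -- key inequality via MVT on g = I^(-α)
  have hg : ∀ x ∈ Ico 0 T,
      HasDerivAt (fun s => I s ^ (-α)) (deriv I x * (-α) * I x ^ (-α - 1)) x :=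
    fun x hx => ((hd1 x hx).hasDerivAt).rpow_const (Or.inl (hpos x hx).ne')
  have key : ∀ t ∈ Ioo 0 T, I t ^ (-α) < I 0 ^ (-α) - α * a * t := by
    intro t ht
    have hsub : Icc (0:ℝ) t ⊆ Ico 0 T := fun x hx => ⟨hx.1, lt_of_le_of_lt hx.2 ht.2⟩
    obtain ⟨c, hc, hcs⟩ := exists_hasDerivAt_eq_slope (fun s => I s ^ (-α))
      (fun x => deriv I x * (-α) * I x ^ (-α - 1)) ht.1
      (fun x hx => ((hg x (hsub hx)).differentiableAt.continuousAt).continuousWithinAt)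
      (fun x hx => hg x (hsub (Ioo_subset_Icc_self hx)))
    have hcT : c ∈ Ico 0 T := hsub (Ioo_subset_Icc_self hc)
    have hIc : 0 < I c := hpos c hcT
    -- deriv I c * (-α) * I c ^ (-α - 1) = -α * f c
    have heq : deriv I c * (-α) * I c ^ (-α - 1) = -α * f c := by
      have : I c ^ (-α - 1) = (I c ^ (α + 1))⁻¹ := by
        rw [show (-α - 1) = -(α+1) by ring, Real.rpow_neg hIc.le]
      rw [this]
      simp only [hfdef]
      rw [div_eq_mul_inv]
      ring
    have hfc : f 0 < f c := hfmono c ⟨hc.1, hcT.2⟩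
    have hf0 : f 0 = a := by simp [hfdef, hadef]
    have hlt : deriv I c * (-α) * I c ^ (-α - 1) < -α * a := by
      rw [heq]
      have := mul_lt_mul_of_pos_left hfc hα
      rw [hf0] at *
      nlinarith
    rw [hcs, sub_zero] at hlt
    have ht0 : 0 < t := ht.1
    rw [div_lt_iff₀ ht0] at hlt
    linarith
  have hPpos : (0:ℝ) < I 0 ^ α := Real.rpow_pos_of_pos hI0 _
  have hinv : I 0 ^ (-α) = (I 0 ^ α)⁻¹ := Real.rpow_neg hI0.le α
  -- positivity of 1 - I0^α α a t
  have hden : ∀ t ∈ Ioo 0 T, 0 < 1 - I 0 ^ α * α * a * t := by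
    intro t ht
    have h1 := key t ht
    have h2 : 0 < I t ^ (-α) := Real.rpow_pos_of_pos (hpos t ⟨ht.1.le, ht.2⟩) _
    have h3 : α * a * t < (I 0 ^ α)⁻¹ := by rw [← hinv]; linarith
    have h4 := mul_lt_mul_of_pos_left h3 hPpos
    rw [mul_inv_cancel₀ hPpos.ne'] at h4
    nlinarith [h4]
  constructor
  · intro t ht
    have h1 := key t ht
    have h2 : 0 < I t ^ (-α) := Real.rpow_pos_of_pos (hpos t ⟨ht.1.le, ht.2⟩) _
    have hD : 0 < I 0 ^ (-α) - α * a * t := lt_trans h2 h1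
    have hIt : I t ^ (-α) = (I t ^ α)⁻¹ := Real.rpow_neg (hpos t ⟨ht.1.le, ht.2⟩).le α
    have h4 : (I 0 ^ (-α) - α * a * t)⁻¹ < I t ^ α := by
      rw [← inv_inv (I t ^ α), ← hIt]
      exact inv_strictAnti₀ h2 h1
    have hden' := hden t ht
    have h5 : I 0 ^ α / (1 - I 0 ^ α * α * a * t) = (I 0 ^ (-α) - α * a * t)⁻¹ := by
      rw [hinv]
      have hfrac : (I 0 ^ α)⁻¹ - α * a * t = (1 - I 0 ^ α * α * a * t) / I 0 ^ α := by
        field_simp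
      rw [hfrac, inv_div]
    rw [h5]
    exact h4
  · by_contra hcon
    push_neg at hcon
    set B := 1 / (I 0 ^ α * α * a) with hB
    have hBpos : 0 < B := by positivity
    have htmem : (B + T)/2 ∈ Ioo 0 T := ⟨by linarith, by linarith⟩
    have h3 := hden _ htmem
    have : (B + T)/2 < B := by
      rw [hB, lt_div_iff₀ (by positivity)]
      nlinarith
    linarith
end

section
/- Let f(y) = ½y − (1/2*)C^{2*}y^{2*/2} as above and let e : (−∞, E(W)] → [‖∇W‖²_{L²}, ∞) be the inverse of f restricted to [‖∇W‖²_{L²}, ∞). Then e is strictly decreasing, and g(E) := (2/(d−2))(e(E) − dE) satisfies g(E(W)) = 0, g(E) > 0 for E < E(W), and g'(E) < −2* for E < E(W). -/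
open Set

/-- Properties of `e`, the inverse of `f(y) = ½y − (1/2*)C^{2*}y^{2*/2}` restricted
to `[N², ∞)` (`N = ‖∇W‖_{L²}`, `E(W) = N²/d`), and of
`g(E) = (2/(d−2))(e(E) − dE)`: `e` is strictly decreasing, `g(E(W)) = 0`,
`g(E) > 0` for `E < E(W)`, and `g'(E) < −2*` for `E < E(W)`. -/
theorem inverse_function_analysis (d : ℕ) (hd : 3 ≤ d) (N : ℝ) (hN : 0 < N)
    (p C EW : ℝ) (hp : p = 2 * d / ((d : ℝ) - 2)) (hC : C = N ^ (-(2 / (d : ℝ))))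
    (hEW : EW = N ^ 2 / d)
    (f : ℝ → ℝ) (hf : ∀ y : ℝ, f y = y / 2 - (1 / p) * C ^ p * y ^ (p / 2))
    (e : ℝ → ℝ)
    (he : ∀ E ∈ Iic EW, e E ∈ Ici (N ^ 2) ∧ f (e E) = E)
    (g : ℝ → ℝ) (hg : ∀ E : ℝ, g E = (2 / ((d : ℝ) - 2)) * (e E - d * E)) :
    StrictAntiOn e (Iic EW) ∧
    g EW = 0 ∧
    (∀ E : ℝ, E < EW → 0 < g E) ∧
    (∀ E : ℝ, E < EW → deriv g E < -p) := by
  have hd3 : (3:ℝ) ≤ (d:ℝ) := by exact_mod_cast hd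
  have hd2 : (0:ℝ) < (d:ℝ) - 2 := by linarith
  have hdpos : (0:ℝ) < (d:ℝ) := by linarith
  have hppos : 0 < p := by rw [hp]; positivity
  have hq : 0 < p / 2 - 1 := by
    have h : p / 2 - 1 = 2 / ((d:ℝ) - 2) := by
      rw [hp]; field_simp; ring
    rw [h]; positivity
  have hN2 : (0:ℝ) < N ^ 2 := by positivity
  have hCpos : 0 < C := by rw [hC]; exact Real.rpow_pos_of_pos hN _
  have hCp : 0 < C ^ p := Real.rpow_pos_of_pos hCpos _
  have hCpval : C ^ p = N ^ (-(2 / (d:ℝ)) * p) := by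
    rw [hC, ← Real.rpow_mul hN.le]
  have hexp : (-(2 / (d:ℝ)) * p) + 2 * (p / 2 - 1) = 0 := by
    rw [hp]; field_simp; ring
  have hφN : C ^ p * (N ^ 2) ^ (p / 2 - 1) = 1 := by
    rw [hCpval, ← Real.rpow_natCast N 2, ← Real.rpow_mul hN.le, ← Real.rpow_add hN]
    push_cast
    rw [hexp, Real.rpow_zero]
  have hsplit : ((N ^ 2 : ℝ)) ^ (p / 2) = (N ^ 2) ^ (p / 2 - 1) * N ^ 2 := by
    have h2 := Real.rpow_add hN2 (p / 2 - 1) 1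
    rw [Real.rpow_one, show p / 2 - 1 + 1 = p / 2 from by ring] at h2
    exact h2
  have hfN2 : f (N ^ 2) = EW := by
    rw [hf, hsplit, hEW]
    rw [show (1 / p) * C ^ p * ((N ^ 2) ^ (p / 2 - 1) * N ^ 2)
        = (1 / p) * (C ^ p * (N ^ 2) ^ (p / 2 - 1)) * N ^ 2 by ring, hφN]
    rw [hp]
    field_simp
    ring
  have hfe : f = fun y => y / 2 - (1 / p) * C ^ p * y ^ (p / 2) := funext hf
  have hderiv : ∀ y : ℝ, 0 < y →
      HasDerivAt f ((1 - C ^ p * y ^ (p / 2 - 1)) / 2) y := by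
    intro y hy
    have h1 : HasDerivAt (fun y : ℝ => y ^ (p / 2)) ((p / 2) * y ^ (p / 2 - 1)) y :=
      Real.hasDerivAt_rpow_const (Or.inl hy.ne')
    have h2 := ((hasDerivAt_id y).div_const 2).sub (h1.const_mul ((1 / p) * C ^ p))
    rw [hfe]
    have hp0 : p⁻¹ * p = 1 := inv_mul_cancel₀ hppos.ne'
    have hv : 1 / 2 - 1 / p * C ^ p * ((p / 2) * y ^ (p / 2 - 1))
        = (1 - C ^ p * y ^ (p / 2 - 1)) / 2 := by
      linear_combination (-(C ^ p * y ^ (p / 2 - 1) / 2)) * hp0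
    exact h2.congr_deriv hv
  have hφgt : ∀ y : ℝ, N ^ 2 < y → 1 < C ^ p * y ^ (p / 2 - 1) := by
    intro y hy
    calc (1:ℝ) = C ^ p * (N ^ 2) ^ (p / 2 - 1) := hφN.symm
    _ < C ^ p * y ^ (p / 2 - 1) := by
        exact mul_lt_mul_of_pos_left (Real.rpow_lt_rpow hN2.le hy hq) hCp
  have hfanti : StrictAntiOn f (Ici (N ^ 2)) := by
    apply strictAntiOn_of_deriv_neg (convex_Ici _)
    · intro y hy
      exact ((hderiv y (lt_of_lt_of_le hN2 hy)).continuousAt).continuousWithinAt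
    · intro y hy
      rw [interior_Ici] at hy
      rw [(hderiv y (hN2.trans hy)).deriv]
      have := hφgt y hy
      linarith
  have heE : ∀ E, E ≤ EW → N ^ 2 ≤ e E := fun E hE => (he E hE).1
  have hfe' : ∀ E, E ≤ EW → f (e E) = E := fun E hE => (he E hE).2
  have heanti : StrictAntiOn e (Iic EW) := by
    intro E1 h1 E2 h2 h12
    rw [mem_Iic] at h1 h2
    by_contra hcon
    push_neg at hcon
    rcases eq_or_lt_of_le hcon with heq | hlt
    · have : f (e E1) = f (e E2) := by rw [heq]
      rw [hfe' E1 h1, hfe' E2 h2] at this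
      exact absurd this (ne_of_lt h12)
    · have := hfanti (heE E1 h1) (heE E2 h2) hlt
      rw [hfe' E1 h1, hfe' E2 h2] at this
      linarith
  have heEW : e EW = N ^ 2 := by
    rcases eq_or_lt_of_le (heE EW le_rfl) with heq | hlt
    · exact heq.symm
    · exfalso
      have := hfanti self_mem_Ici (le_of_lt hlt) hlt
      rw [hfe' EW le_rfl, hfN2] at this
      exact lt_irrefl _ this
  have hgEW : g EW = 0 := by
    rw [hg, heEW, hEW]
    field_simp
    ring
  have heGT : ∀ E, E < EW → N ^ 2 < e E := by
    intro E hE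
    rcases eq_or_lt_of_le (heE E hE.le) with heq | h
    · exfalso
      have h1 := hfe' E hE.le
      rw [← heq, hfN2] at h1
      linarith
    · exact h
  have hgpos : ∀ E, E < EW → 0 < g E := by
    intro E hE
    have hygt : N ^ 2 < e E := heGT E hE
    have hmono : StrictMonoOn (fun y => y - (d:ℝ) * f y) (Ici (N ^ 2)) := by
      apply strictMonoOn_of_deriv_pos (convex_Ici _)
      · intro y hy
        have hdy : HasDerivAt (fun y : ℝ => y - (d:ℝ) * f y)
            (1 - (d:ℝ) * ((1 - C ^ p * y ^ (p / 2 - 1)) / 2)) y :=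
          (hasDerivAt_id y).sub ((hderiv y (lt_of_lt_of_le hN2 hy)).const_mul (d:ℝ))
        exact hdy.continuousAt.continuousWithinAt
      · intro x hx
        rw [interior_Ici] at hx
        have hdx : HasDerivAt (fun y : ℝ => y - (d:ℝ) * f y)
            (1 - (d:ℝ) * ((1 - C ^ p * x ^ (p / 2 - 1)) / 2)) x :=
          (hasDerivAt_id x).sub ((hderiv x (hN2.trans hx)).const_mul (d:ℝ))
        rw [hdx.deriv]
        have := hφgt x hx
        nlinarith
    have h0 := hmono self_mem_Ici hygt.le hygt
    simp only at h0
    rw [hfN2, hfe' E hE.le] at h0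
    have hzero : N ^ 2 - (d:ℝ) * EW = 0 := by
      rw [hEW]; field_simp; ring
    rw [hg]
    have hpos2 : 0 < e E - (d:ℝ) * E := by linarith
    have hcpos : (0:ℝ) < 2 / ((d:ℝ) - 2) := by positivity
    exact mul_pos hcpos hpos2
  refine ⟨heanti, hgEW, hgpos, ?_⟩
  intro E hE
  have hy := heGT E hE
  have hy0 : 0 < e E := hN2.trans hy
  have hfd := hderiv (e E) hy0
  have hfd_neg : (1 - C ^ p * (e E) ^ (p / 2 - 1)) / 2 < 0 := by
    have := hφgt _ hy
    linarith
  have hcont : ContinuousAt e E := by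
    have hmono : StrictMonoOn (fun x => -(e x)) (Iic EW) :=
      fun a ha b hb hab => neg_lt_neg (heanti ha hb hab)
    have hs : Iic EW ∈ nhds E := Iic_mem_nhds hE
    have himg : (fun x => -(e x)) '' (Iic EW) ∈ nhds (-(e E)) := by
      have hsub : Iic (-(N ^ 2)) ⊆ (fun x => -(e x)) '' (Iic EW) := by
        intro z hz
        rw [mem_Iic] at hz
        have hz' : N ^ 2 ≤ -z := by linarith
        have hfz : f (-z) ≤ EW := by
          rcases eq_or_lt_of_le hz' with h | h
          · rw [← h, hfN2]
          · have := hfanti self_mem_Ici (le_of_lt h) h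
            rw [hfN2] at this
            linarith
        have hinj : e (f (-z)) = -z := by
          have h1 := hfe' _ hfz
          exact hfanti.injOn (heE _ hfz) hz' h1
        exact ⟨f (-z), hfz, by simp [hinj]⟩
      exact Filter.mem_of_superset (Iic_mem_nhds (neg_lt_neg hy)) hsub
    have hc := hmono.continuousAt_of_image_mem_nhds hs himg
    have := hc.neg
    convert this using 1
    funext x
    simp
  have hev : ∀ᶠ x in nhds E, f (e x) = x := by
    filter_upwards [Iio_mem_nhds hE] with x hx
    exact hfe' x hx.le
  have heD : HasDerivAt e ((1 - C ^ p * (e E) ^ (p / 2 - 1)) / 2)⁻¹ E :=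
    HasDerivAt.of_local_left_inverse hcont hfd (ne_of_lt hfd_neg) hev
  have hgD : HasDerivAt g
      ((2 / ((d:ℝ) - 2)) * (((1 - C ^ p * (e E) ^ (p / 2 - 1)) / 2)⁻¹ - (d:ℝ))) E := by
    have h1 : HasDerivAt (fun x : ℝ => (2 / ((d:ℝ) - 2)) * (e x - (d:ℝ) * x))
        ((2 / ((d:ℝ) - 2)) * (((1 - C ^ p * (e E) ^ (p / 2 - 1)) / 2)⁻¹ - (d:ℝ) * 1)) E :=
      (heD.sub ((hasDerivAt_id E).const_mul (d:ℝ))).const_mul (2 / ((d:ℝ) - 2))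
    have hge : g = fun E => (2 / ((d:ℝ) - 2)) * (e E - (d:ℝ) * E) := funext hg
    rw [hge]
    convert h1 using 2 <;> ring
  rw [hgD.deriv]
  have hinv : ((1 - C ^ p * (e E) ^ (p / 2 - 1)) / 2)⁻¹ < 0 := inv_lt_zero.mpr hfd_neg
  have hcpos : (0:ℝ) < 2 / ((d:ℝ) - 2) := by positivity
  have hlt : (2 / ((d:ℝ) - 2)) * (((1 - C ^ p * (e E) ^ (p / 2 - 1)) / 2)⁻¹ - (d:ℝ))
      < (2 / ((d:ℝ) - 2)) * (0 - (d:ℝ)) :=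
    mul_lt_mul_of_pos_left (by linarith) hcpos
  have heq : (2 / ((d:ℝ) - 2)) * (0 - (d:ℝ)) = -p := by
    rw [hp]; field_simp; ring
  linarith
end

section
/- If u ∈ Ḣ¹(ℝᵈ) satisfies E(u) ≤ E₀ < E(W) and ‖∇u‖²_{L²} ≥ ‖∇W‖²_{L²}, then ‖∇u‖²_{L²} ≥ e(E(u)) ≥ e(E₀) > ‖∇W‖²_{L²}, and consequently −K(u) ≥ g(E(u)) > 0, where e, g are as defined from the sharp Sobolev inequality. -/
open MeasureTheory Set

/-- Key analytic facts about `f(y) = y/2 - (1/p) C^p y^{p/2}`: it is strictly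
decreasing on `[N², ∞)` and `f(N²) = N²/d`. -/
lemma trapping_aux (d : ℕ) (hd : 3 ≤ d) (N : ℝ) (hN : 0 < N)
    (p C : ℝ) (hp : p = 2 * d / ((d : ℝ) - 2))
    (hC : C = N ^ (-(2 / (d : ℝ)))) :
    (∀ a b : ℝ, N ^ 2 ≤ a → a < b →
      b / 2 - (1 / p) * C ^ p * b ^ (p / 2) < a / 2 - (1 / p) * C ^ p * a ^ (p / 2)) ∧
    N ^ 2 / 2 - (1 / p) * C ^ p * ((N : ℝ) ^ 2) ^ (p / 2) = N ^ 2 / d := by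
  have hd3 : (3 : ℝ) ≤ (d : ℝ) := by exact_mod_cast hd
  have hdm : (0 : ℝ) < (d : ℝ) - 2 := by linarith
  have hdpos : (0 : ℝ) < (d : ℝ) := by linarith
  have hp2 : 2 < p := by
    rw [hp, lt_div_iff₀ hdm]; linarith
  have hppos : 0 < p := by linarith
  have hs : 1 < p / 2 := by linarith
  have hCpos : 0 < C := by rw [hC]; exact Real.rpow_pos_of_pos hN _
  have hCp : 0 < C ^ p := Real.rpow_pos_of_pos hCpos p
  have hN2 : (0 : ℝ) < N ^ 2 := by positivity
  have h2 : (N : ℝ) ^ 2 = N ^ (2 : ℝ) := by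
    rw [show (2 : ℝ) = ((2 : ℕ) : ℝ) by norm_num, Real.rpow_natCast]
  have hkey : C ^ p * ((N : ℝ) ^ 2) ^ (p / 2 - 1) = 1 := by
    rw [hC, h2, ← Real.rpow_mul hN.le, ← Real.rpow_mul hN.le, ← Real.rpow_add hN]
    have hz : (-(2 / (d : ℝ))) * p + 2 * (p / 2 - 1) = 0 := by
      rw [hp]; field_simp; ring
    rw [hz, Real.rpow_zero]
  have hsplitN : ((N : ℝ) ^ 2) ^ (p / 2) = ((N : ℝ) ^ 2) ^ (p / 2 - 1) * (N : ℝ) ^ 2 := by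
    have h := Real.rpow_add hN2 (p / 2 - 1) 1
    rw [Real.rpow_one, show p / 2 - 1 + 1 = p / 2 by ring] at h
    exact h
  constructor
  · intro a b hN2a hab
    have ha : 0 < a := lt_of_lt_of_le hN2 hN2a
    have hb : 0 < b := ha.trans hab
    have hx : 0 < b / a - 1 := by
      have : 1 < b / a := (one_lt_div ha).2 hab
      linarith
    have bern := one_add_mul_self_lt_rpow_one_add (by linarith : (-1 : ℝ) ≤ b / a - 1)
      (ne_of_gt hx) hs
    have hA : (0 : ℝ) < a ^ (p / 2) := Real.rpow_pos_of_pos ha _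
    have hmul := mul_lt_mul_of_pos_left bern hA
    have hRHS : a ^ (p / 2) * (1 + (b / a - 1)) ^ (p / 2) = b ^ (p / 2) := by
      rw [← Real.mul_rpow ha.le (by positivity)]
      congr 1; field_simp; ring
    have hsub : a ^ (p / 2 - 1) = a ^ (p / 2) / a := by
      rw [Real.rpow_sub ha, Real.rpow_one]
    have hLHS : a ^ (p / 2) * (1 + p / 2 * (b / a - 1)) =
        a ^ (p / 2) + p / 2 * (a ^ (p / 2 - 1) * (b - a)) := by
      rw [hsub]; field_simp
    have h1 : a ^ (p / 2) + p / 2 * (a ^ (p / 2 - 1) * (b - a)) < b ^ (p / 2) := by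
      rw [← hLHS, ← hRHS]; exact hmul
    have h2' : 1 ≤ C ^ p * a ^ (p / 2 - 1) := by
      have hmon : ((N : ℝ) ^ 2) ^ (p / 2 - 1) ≤ a ^ (p / 2 - 1) :=
        Real.rpow_le_rpow hN2.le hN2a (by linarith)
      calc (1 : ℝ) = C ^ p * ((N : ℝ) ^ 2) ^ (p / 2 - 1) := hkey.symm
        _ ≤ C ^ p * a ^ (p / 2 - 1) := by
            exact mul_le_mul_of_nonneg_left hmon hCp.le
    have hba : 0 < b - a := by linarith
    have e1 : (1 / p) * C ^ p * (p / 2 * (a ^ (p / 2 - 1) * (b - a))) =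
        (1 / 2) * (C ^ p * a ^ (p / 2 - 1)) * (b - a) := by
      field_simp
    have step : (b - a) / 2 < (1 / p) * C ^ p * (b ^ (p / 2) - a ^ (p / 2)) := by
      calc (b - a) / 2 ≤ (1 / 2) * (C ^ p * a ^ (p / 2 - 1)) * (b - a) := by nlinarith
        _ = (1 / p) * C ^ p * (p / 2 * (a ^ (p / 2 - 1) * (b - a))) := e1.symm
        _ < (1 / p) * C ^ p * (b ^ (p / 2) - a ^ (p / 2)) := by
            apply mul_lt_mul_of_pos_left _ (by positivity)
            linarith
    have dist : (1 / p) * C ^ p * (b ^ (p / 2) - a ^ (p / 2)) =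
        (1 / p) * C ^ p * b ^ (p / 2) - (1 / p) * C ^ p * a ^ (p / 2) := by ring
    linarith [dist ▸ step]
  · have hval : (1 / p) * C ^ p * ((N : ℝ) ^ 2) ^ (p / 2) = (1 / p) * N ^ 2 := by
      rw [hsplitN]
      calc (1 / p) * C ^ p * (((N : ℝ) ^ 2) ^ (p / 2 - 1) * (N : ℝ) ^ 2)
          = (1 / p) * (C ^ p * ((N : ℝ) ^ 2) ^ (p / 2 - 1)) * (N : ℝ) ^ 2 := by ring
        _ = (1 / p) * N ^ 2 := by rw [hkey]; ring
    rw [hval, hp]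
    field_simp
    ring

/-- Above-threshold trapping: if `E(u) ≤ E₀ < E(W)` and `‖∇u‖² ≥ ‖∇W‖² = N²`,
then `‖∇u‖² ≥ e(E(u)) ≥ e(E₀) > N²` and `−K(u) ≥ g(E(u)) > 0`, where `e` is the
decreasing inverse of `f(y) = ½y − (1/2*)C^{2*}y^{2*/2}` on `[N²,∞)`,
`g(E) = (2/(d−2))(e(E) − dE)`, and the sharp Sobolev inequality gives
`E(u) ≥ f(‖∇u‖²)`. -/
theorem trapping_above_threshold (d : ℕ) (hd : 3 ≤ d) (N : ℝ) (hN : 0 < N)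
    (p C EW E₀ : ℝ) (hp : p = 2 * d / ((d : ℝ) - 2))
    (hC : C = N ^ (-(2 / (d : ℝ)))) (hEW : EW = N ^ 2 / d)
    (f : ℝ → ℝ) (hf : ∀ y : ℝ, f y = y / 2 - (1 / p) * C ^ p * y ^ (p / 2))
    (e : ℝ → ℝ) (he : ∀ E ∈ Iic EW, e E ∈ Ici (N ^ 2) ∧ f (e E) = E)
    (g : ℝ → ℝ) (hg : ∀ E : ℝ, g E = (2 / ((d : ℝ) - 2)) * (e E - d * E))
    (u : EuclideanSpace ℝ (Fin d) → ℝ)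
    (hgrad : Integrable (fun x => ‖fderiv ℝ u x‖ ^ 2) volume)
    (hLp : Integrable (fun x => |u x| ^ p) volume)
    -- the sharp Sobolev inequality, in the form `E(u) ≥ f(‖∇u‖²_{L²})`
    (hSob : (∫ x, ((1 / 2) * ‖fderiv ℝ u x‖ ^ 2 - (1 / p) * |u x| ^ p)) ≥
      f (∫ x, ‖fderiv ℝ u x‖ ^ 2))
    (hE : (∫ x, ((1 / 2) * ‖fderiv ℝ u x‖ ^ 2 - (1 / p) * |u x| ^ p)) ≤ E₀)
    (hE₀ : E₀ < EW)
    (hbig : (∫ x, ‖fderiv ℝ u x‖ ^ 2) ≥ N ^ 2) :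
    (∫ x, ‖fderiv ℝ u x‖ ^ 2) ≥
        e (∫ x, ((1 / 2) * ‖fderiv ℝ u x‖ ^ 2 - (1 / p) * |u x| ^ p)) ∧
    e (∫ x, ((1 / 2) * ‖fderiv ℝ u x‖ ^ 2 - (1 / p) * |u x| ^ p)) ≥ e E₀ ∧
    e E₀ > N ^ 2 ∧
    -(∫ x, (‖fderiv ℝ u x‖ ^ 2 - |u x| ^ p)) ≥
        g (∫ x, ((1 / 2) * ‖fderiv ℝ u x‖ ^ 2 - (1 / p) * |u x| ^ p)) ∧
    0 < g (∫ x, ((1 / 2) * ‖fderiv ℝ u x‖ ^ 2 - (1 / p) * |u x| ^ p)) := by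
  obtain ⟨hanti, hfN2⟩ := trapping_aux d hd N hN p C hp hC
  have hd3 : (3 : ℝ) ≤ (d : ℝ) := by exact_mod_cast hd
  have hdm : (0 : ℝ) < (d : ℝ) - 2 := by linarith
  have hdpos : (0 : ℝ) < (d : ℝ) := by linarith
  have hppos : 0 < p := by rw [hp]; positivity
  set En := (∫ x, ((1 / 2) * ‖fderiv ℝ u x‖ ^ 2 - (1 / p) * |u x| ^ p)) with hEn
  set I := (∫ x, ‖fderiv ℝ u x‖ ^ 2) with hI
  set J := (∫ x, |u x| ^ p) with hJ
  -- basic facts from `he`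
  have hEnEW : En ≤ EW := le_of_lt (lt_of_le_of_lt hE hE₀)
  obtain ⟨heEn_mem, hfeEn⟩ := he En hEnEW
  obtain ⟨heE0_mem, hfeE0⟩ := he E₀ (le_of_lt hE₀)
  have heEn_ge : N ^ 2 ≤ e En := heEn_mem
  have heE0_ge : N ^ 2 ≤ e E₀ := heE0_mem
  -- f agrees with the explicit formula
  have hfI : f I = I / 2 - (1 / p) * C ^ p * I ^ (p / 2) := hf I
  -- Claim 1 : I ≥ e En
  have claim1 : I ≥ e En := by
    by_contra h
    push_neg at h
    have := hanti I (e En) hbig h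
    rw [← hf I, ← hf (e En), hfeEn] at this
    linarith [hSob]
  -- Claim 2 : e En ≥ e E₀
  have claim2 : e En ≥ e E₀ := by
    by_contra h
    push_neg at h
    have := hanti (e En) (e E₀) heEn_ge h
    rw [← hf (e En), ← hf (e E₀), hfeEn, hfeE0] at this
    linarith
  -- Claim 3 : e E₀ > N²
  have claim3 : e E₀ > N ^ 2 := by
    rcases lt_or_eq_of_le heE0_ge with h | h
    · exact h
    · exfalso
      have : f (e E₀) = EW := by
        rw [← h, hf, hfN2, hEW]
      rw [hfeE0] at this
      linarith
  -- energy identities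
  have hEn_eq : En = (1 / 2) * I - (1 / p) * J := by
    rw [hEn, integral_sub (hgrad.const_mul (1 / 2)) (hLp.const_mul (1 / p)),
      integral_const_mul, integral_const_mul]
  have hK_eq : (∫ x, (‖fderiv ℝ u x‖ ^ 2 - |u x| ^ p)) = I - J := by
    rw [integral_sub hgrad hLp]
  -- arithmetic relations for p
  set c := 2 / ((d : ℝ) - 2) with hc
  have hcpos : 0 < c := by rw [hc]; positivity
  have hpc : p = c * d := by rw [hp, hc]; field_simp
  have hpc2 : p / 2 - 1 = c := by rw [hp, hc]; field_simp; ring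
  -- -K = c * (I - d * En)
  have hnegK : -(∫ x, (‖fderiv ℝ u x‖ ^ 2 - |u x| ^ p)) = c * I - c * d * En := by
    have hp0 : p ≠ 0 := ne_of_gt hppos
    have hJval : J = p * ((1 / 2) * I - En) := by
      have h1 : (1 / p) * J = (1 / 2) * I - En := by linarith [hEn_eq]
      calc J = p * ((1 / p) * J) := by field_simp
        _ = p * ((1 / 2) * I - En) := by rw [h1]
    rw [hK_eq, hJval]
    linear_combination I * hpc2 - En * hpc
  -- Claim 4 : -K ≥ g En
  have claim4 : -(∫ x, (‖fderiv ℝ u x‖ ^ 2 - |u x| ^ p)) ≥ g En := by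
    rw [hnegK, hg En]
    have : c * (e En - d * En) = c * e En - c * d * En := by ring
    rw [this]
    have := mul_le_mul_of_nonneg_left claim1 hcpos.le
    linarith
  -- Claim 5 : 0 < g En
  have claim5 : 0 < g En := by
    rw [hg En]
    apply mul_pos hcpos
    have heEn_gt : N ^ 2 < e En := lt_of_lt_of_le claim3 claim2
    have hlt : f (e En) < f (N ^ 2) := by
      rw [hf, hf]
      exact hanti (N ^ 2) (e En) le_rfl heEn_gt
    have hfN : f (N ^ 2) = N ^ 2 / d := by rw [hf]; exact hfN2
    rw [hfeEn, hfN] at hlt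
    have : (d : ℝ) * En < (d : ℝ) * (N ^ 2 / d) := by
      exact mul_lt_mul_of_pos_left hlt hdpos
    have hNd : (d : ℝ) * (N ^ 2 / d) = N ^ 2 := by field_simp
    rw [hNd] at this
    linarith
  exact ⟨claim1, claim2, claim3, claim4, claim5⟩
end
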